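/- For finitely supported 2D signals, correlation and convolution satisfy the associativity identity α' ⋆ (α * ξ) = (α' ⋆ α) * ξ, where ⋆ denotes correlation and * denotes convolution. -/

import Mathlib

/-- 2D convolution: (α * ξ)[i,j] = Σ_{p,q} α[p,q]·ξ[i-p, j-q]. -/
noncomputable def conv (α ξ : ℤ × ℤ → ℝ) : ℤ × ℤ → ℝ :=
  fun z => ∑ᶠ p : ℤ × ℤ, α p * ξ (z.1 - p.1, z.2 - p.2)

/-- 2D correlation: (α ⋆ ξ)[i,j] = Σ_{p,q} α[p,q]·ξ[i+p, j+q]. -/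
noncomputable def corr (α ξ : ℤ × ℤ → ℝ) : ℤ × ℤ → ℝ :=
  fun z => ∑ᶠ p : ℤ × ℤ, α p * ξ (z.1 + p.1, z.2 + p.2)

/-- ℓ² inner product of 2D signals. -/
noncomputable def ip (f g : ℤ × ℤ → ℝ) : ℝ := ∑ᶠ z : ℤ × ℤ, f z * g z

/-- Kronecker delta on ℤ×ℤ. -/
def kdelta : ℤ × ℤ → ℝ := fun z => if z = (0, 0) then 1 else 0

theorem corr_conv_assoc (α' α ξ : ℤ × ℤ → ℝ)
    (hα' : (Function.support α').Finite) (hα : (Function.support α).Finite)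
    (hξ : (Function.support ξ).Finite) : 
    corr α' (conv α ξ) = conv (corr α' α) ξ := by
  funext z
  simp only [corr, conv]
  -- step 1: distribute multiplication in LHS, change variables q = r + p
  have key : ∀ p : ℤ × ℤ,
      (α' p * ∑ᶠ q : ℤ × ℤ, α q * ξ (z.1 + p.1 - q.1, z.2 + p.2 - q.2))
        = ∑ᶠ r : ℤ × ℤ, α' p * (α (r.1 + p.1, r.2 + p.2) * ξ (z.1 - r.1, z.2 - r.2)) := by
    intro p
    have hfin : (Function.support fun q : ℤ × ℤ =>
        α q * ξ (z.1 + p.1 - q.1, z.2 + p.2 - q.2)).Finite := by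
      apply hα.subset
      intro q hq
      simp only [Function.mem_support] at hq ⊢
      intro h; exact hq (by rw [h, zero_mul])
    rw [mul_finsum _ _]
    have := finsum_comp_equiv (Equiv.addRight p)
      (f := fun q : ℤ × ℤ => α' p * (α q * ξ (z.1 + p.1 - q.1, z.2 + p.2 - q.2)))
    rw [← this]
    refine finsum_congr fun r => ?_
    have h1 : ((Equiv.addRight p) r : ℤ × ℤ) = (r.1 + p.1, r.2 + p.2) := rfl
    rw [h1]
    have h2 : z.1 + p.1 - (r.1 + p.1) = z.1 - r.1 := by ring
    have h3 : z.2 + p.2 - (r.2 + p.2) = z.2 - r.2 := by ring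
    rw [h2, h3]
  rw [finsum_congr key]
  -- step 2: swap the two sums
  have hsupL : (Function.support fun p : ℤ × ℤ =>
      ∑ᶠ r : ℤ × ℤ, α' p * (α (r.1 + p.1, r.2 + p.2) * ξ (z.1 - r.1, z.2 - r.2)))
      ⊆ hα'.toFinset := by
    intro p hp
    simp only [Function.mem_support] at hp
    simp only [Set.Finite.coe_toFinset, Function.mem_support]
    intro h; apply hp
    rw [finsum_congr fun r => by rw [h, zero_mul]]
    exact finsum_zero
  rw [finsum_eq_sum_of_support_subset _ hsupL]
  have hrfin : ∀ p : ℤ × ℤ, (Function.support fun r : ℤ × ℤ =>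
      α' p * (α (r.1 + p.1, r.2 + p.2) * ξ (z.1 - r.1, z.2 - r.2))).Finite := by
    intro p
    apply Set.Finite.subset (hξ.image fun w : ℤ × ℤ => (z.1 - w.1, z.2 - w.2))
    intro r hr
    simp only [Function.mem_support] at hr
    refine ⟨(z.1 - r.1, z.2 - r.2), ?_, by simp⟩
    simp only [Function.mem_support]
    intro h; exact hr (by rw [h, mul_zero, mul_zero])
  rw [sum_finsum_comm _ _ fun p _ => hrfin p]
  refine finsum_congr fun r => ?_
  -- step 3: fold back inner finsum and pull ξ out
  have hsupI : (Function.support fun p : ℤ × ℤ =>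
      α' p * (α (r.1 + p.1, r.2 + p.2) * ξ (z.1 - r.1, z.2 - r.2))) ⊆ hα'.toFinset := by
    intro p hp
    simp only [Function.mem_support] at hp
    simp only [Set.Finite.coe_toFinset, Function.mem_support]
    intro h; exact hp (by rw [h, zero_mul])
  rw [← finsum_eq_sum_of_support_subset _ hsupI]
  have hfin2 : (Function.support fun p : ℤ × ℤ =>
      α' p * α (r.1 + p.1, r.2 + p.2)).Finite := by
    apply hα'.subset
    intro p hp
    simp only [Function.mem_support] at hp ⊢
    intro h; exact hp (by rw [h, zero_mul])
  rw [finsum_mul _ (ξ (z.1 - r.1, z.2 - r.2))]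
  refine finsum_congr fun p => by ring
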